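/- For m > 1, in G = BS(m, m+1) = ⟨a,t | t⁻¹aᵐt = a^{m+1}⟩ one has a = [aᵐ, t] ∈ γ₂G, hence γ₂G = γ₃G = γ_ωG ≠ 1; the lower central series of G has length 2. -/

import Mathlib

/-- The defining relation of the Baumslag-Solitar group `BS(m,n)`:
`t⁻¹ * a^m * t * a^(-n)`. -/
def BSrels (m n : ℤ) : Set (FreeGroup (Fin 2)) :=
  {(FreeGroup.of 1)⁻¹ * (FreeGroup.of 0) ^ m * (FreeGroup.of 1) * ((FreeGroup.of 0) ^ n)⁻¹}

/-- The Baumslag-Solitar group `BS(m,n) = ⟨a, t ∣ t⁻¹ aᵐ t = aⁿ⟩`. -/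
abbrev BS (m n : ℤ) : Type := PresentedGroup (BSrels m n)

/-- The generator `a` of `BS(m,n)`. -/
def bsa (m n : ℤ) : BS m n := PresentedGroup.of 0

/-- The generator `t` of `BS(m,n)`. -/
def bst (m n : ℤ) : BS m n := PresentedGroup.of 1

@[ext] structure MyAff where
  c : ℚˣ
  b : ℚ
namespace MyAff
instance : Mul MyAff := ⟨fun x y => ⟨x.c * y.c, x.b + (x.c : ℚ) * y.b⟩⟩
instance : One MyAff := ⟨⟨1, 0⟩⟩
instance : Inv MyAff := ⟨fun x => ⟨x.c⁻¹, -((x.c⁻¹ : ℚˣ) : ℚ) * x.b⟩⟩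
@[simp] lemma mul_c (x y : MyAff) : (x * y).c = x.c * y.c := rfl
@[simp] lemma mul_b (x y : MyAff) : (x * y).b = x.b + (x.c : ℚ) * y.b := rfl
@[simp] lemma one_c : (1 : MyAff).c = 1 := rfl
@[simp] lemma one_b : (1 : MyAff).b = 0 := rfl
@[simp] lemma inv_c (x : MyAff) : x⁻¹.c = x.c⁻¹ := rfl
@[simp] lemma inv_b (x : MyAff) : x⁻¹.b = -((x.c⁻¹ : ℚˣ) : ℚ) * x.b := rfl
instance : Group MyAff where
  mul_assoc x y z := by ext <;> simp <;> ring
  one_mul x := by ext <;> simp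
  mul_one x := by ext <;> simp
  inv_mul_cancel x := by ext <;> simp
def trans : Multiplicative ℚ →* MyAff where
  toFun x := ⟨1, x.toAdd⟩
  map_one' := by ext <;> simp
  map_mul' x y := by ext <;> simp
lemma trans_zpow (k : ℤ) : (⟨1, (1:ℚ)⟩ : MyAff) ^ k = ⟨1, (k : ℚ)⟩ := by
  have h : (⟨1, (1:ℚ)⟩ : MyAff) = trans (Multiplicative.ofAdd 1) := rfl
  rw [h, ← map_zpow, ← ofAdd_zsmul]
  simp [trans]
end MyAff

section
variable (m : ℤ) (hm : 1 < m)

include hm in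
lemma hmQ : ((m : ℚ) / ((m : ℚ) + 1)) ≠ 0 := by
  have h0 : (0 : ℤ) < m := by omega
  have h1 : (m : ℚ) ≠ 0 := by exact_mod_cast h0.ne'
  have h2 : (m : ℚ) + 1 ≠ 0 := by
    have h3 : (0 : ℤ) < m + 1 := by omega
    have h4 : (0 : ℚ) < (m : ℚ) + 1 := by exact_mod_cast h3
    exact ne_of_gt h4
  exact div_ne_zero h1 h2

noncomputable def affGens : Fin 2 → MyAff :=
  fun i => if i = 0 then ⟨1, 1⟩ else ⟨Units.mk0 _ (hmQ m hm), 0⟩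

include hm in
lemma affGens_rel : ∀ r ∈ BSrels m (m + 1), FreeGroup.lift (affGens m hm) r = 1 := by
  intro r hr
  rw [Set.mem_singleton_iff.1 hr]
  simp only [map_mul, map_inv, map_zpow, FreeGroup.lift_apply_of]
  have h0 : affGens m hm 0 = ⟨1, 1⟩ := rfl
  have h1 : affGens m hm 1 = ⟨Units.mk0 _ (hmQ m hm), 0⟩ := rfl
  rw [h0, h1, MyAff.trans_zpow, MyAff.trans_zpow]
  have h0' : (0 : ℤ) < m := by omega
  have hm0 : (m : ℚ) ≠ 0 := by exact_mod_cast h0'.ne'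
  have hm1 : (m : ℚ) + 1 ≠ 0 := by
    have h3 : (0 : ℤ) < m + 1 := by omega
    have h4 : (0 : ℚ) < (m : ℚ) + 1 := by exact_mod_cast h3
    exact ne_of_gt h4
  ext
  · simp
  · push_cast
    simp
    field_simp
    ring

include hm in
lemma bsa_ne_one : bsa m (m + 1) ≠ 1 := by
  intro h
  have := congrArg (PresentedGroup.toGroup (affGens_rel m hm)) h
  rw [map_one] at this
  rw [bsa, PresentedGroup.toGroup.of] at this
  have : ((1 : ℚ) : ℚ) = 0 := by
    have := congrArg MyAff.b this
    simpa [affGens] using this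
  norm_num at this

noncomputable def bsDeg : BS m (m + 1) →* Multiplicative ℤ :=
  PresentedGroup.toGroup (f := fun i => if i = 0 then 1 else Multiplicative.ofAdd 1)
    (by intro r hr; rw [Set.mem_singleton_iff.1 hr]; simp)

lemma bsDeg_t : bsDeg m (bst m (m + 1)) = Multiplicative.ofAdd 1 := by
  rw [bst, bsDeg, PresentedGroup.toGroup.of]; rfl

end

lemma bs_rel (m n : ℤ) :
    (bst m n)⁻¹ * bsa m n ^ m * bst m n = bsa m n ^ n := by
  have h : PresentedGroup.mk (BSrels m n)
      ((FreeGroup.of 1)⁻¹ * (FreeGroup.of 0) ^ m * (FreeGroup.of 1)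
        * ((FreeGroup.of 0) ^ n)⁻¹) = 1 := by
    apply (QuotientGroup.eq_one_iff _).2
    exact Subgroup.subset_normalClosure rfl
  simp only [map_mul, map_inv, map_zpow] at h
  have h2 := mul_eq_one_iff_eq_inv.1 h
  simpa [bsa, bst, PresentedGroup.of] using h2

open scoped commutatorElement

lemma lcs_succ'
 (G : Type*) [Group G] (n : ℕ) :
    (⊤ : Subgroup G).lowerCentralSeries (n + 1) = ⁅(⊤ : Subgroup G).lowerCentralSeries n, ⊤⁆ := rfl

/-- For `m > 1` and `G = BS(m, m+1)` one has `a = [aᵐ,t] = (aᵐ)⁻¹ t⁻¹ aᵐ t ∈ γ₂G`,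
hence `γ₂G = γ₃G = γ_ωG ≠ 1`: the lower central series of `G` has length `2`
(`γ₂G = γ₃G` but `γ₁G ≠ γ₂G`). -/
theorem bs_m_m_add_one_lcs_length_two (m : ℤ) (hm : 1 < m) :
    (bsa m (m + 1) =
      (bsa m (m + 1) ^ m)⁻¹ * (bst m (m + 1))⁻¹ * bsa m (m + 1) ^ m * bst m (m + 1)) ∧
    (bsa m (m + 1) ∈ (⊤ : Subgroup (BS m (m + 1))).lowerCentralSeries 1) ∧
    ((⊤ : Subgroup (BS m (m + 1))).lowerCentralSeries 1 = (⊤ : Subgroup (BS m (m + 1))).lowerCentralSeries 2) ∧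
    ((⊤ : Subgroup (BS m (m + 1))).lowerCentralSeries 1 = ⨅ i : ℕ, (⊤ : Subgroup (BS m (m + 1))).lowerCentralSeries i) ∧
    ((⨅ i : ℕ, (⊤ : Subgroup (BS m (m + 1))).lowerCentralSeries i) ≠ ⊥) ∧
    ((⊤ : Subgroup (BS m (m + 1))).lowerCentralSeries 0 ≠ (⊤ : Subgroup (BS m (m + 1))).lowerCentralSeries 1) := by
  set a := bsa m (m + 1) with ha_def
  set t := bst m (m + 1) with ht_def
  have hrel : t⁻¹ * a ^ m * t = a ^ (m + 1) := bs_rel m (m + 1)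
  -- the commutator identity
  have h1 : a = (a ^ m)⁻¹ * t⁻¹ * a ^ m * t := by
    have h2 : (a ^ m)⁻¹ * t⁻¹ * a ^ m * t = (a ^ m)⁻¹ * (t⁻¹ * a ^ m * t) := by group
    rw [h2, hrel, ← zpow_neg, ← zpow_add]
    norm_num
  have hca : a = ⁅(a ^ m)⁻¹, t⁻¹⁆ := by
    rw [commutatorElement_def, inv_inv, inv_inv]; exact h1
  -- a is in γ₂
  have ha1 : a ∈ (⊤ : Subgroup (BS m (m + 1))).lowerCentralSeries 1 := by
    rw [lcs_succ', lowerCentralSeries_zero]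
    rw [hca]
    exact Subgroup.commutator_mem_commutator (Subgroup.mem_top _) (Subgroup.mem_top _)
  -- the normal closure of a
  set N := Subgroup.normalClosure {a} with hN_def
  have haN : a ∈ N := Subgroup.subset_normalClosure rfl
  have hNle : N ≤ (⊤ : Subgroup (BS m (m + 1))).lowerCentralSeries 2 := by
    apply Subgroup.normalClosure_le_normal
    intro x hx
    rw [Set.mem_singleton_iff] at hx
    subst hx
    rw [lcs_succ' _ 1, hca]
    exact Subgroup.commutator_mem_commutator
      (Subgroup.inv_mem _ (Subgroup.zpow_mem _ ha1 m)) (Subgroup.mem_top _)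
  -- γ₂ ≤ N  (the quotient by N is cyclic, generated by the image of t)
  have hπa : (QuotientGroup.mk' N) a = 1 := (QuotientGroup.eq_one_iff _).2 haN
  have hgen : ∀ x : BS m (m + 1),
      (QuotientGroup.mk' N) x ∈ Subgroup.zpowers ((QuotientGroup.mk' N) t) := by
    intro x
    refine PresentedGroup.generated_by _
      ((Subgroup.zpowers ((QuotientGroup.mk' N) t)).comap (QuotientGroup.mk' N)) ?_ x
    intro j
    fin_cases j
    · show (QuotientGroup.mk' N) a ∈ Subgroup.zpowers ((QuotientGroup.mk' N) t)
      rw [hπa]; exact Subgroup.one_mem _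
    · exact Subgroup.mem_zpowers _
  have hle : (⊤ : Subgroup (BS m (m + 1))).lowerCentralSeries 1 ≤ N := by
    rw [lcs_succ', lowerCentralSeries_zero, Subgroup.commutator_le]
    intro g _ h _
    have hone : (QuotientGroup.mk' N) ⁅g, h⁆ = 1 := by
      rw [map_commutatorElement]
      obtain ⟨j, hj⟩ := hgen g
      obtain ⟨k, hk⟩ := hgen h
      rw [← hj, ← hk]
      exact commutatorElement_eq_one_iff_commute.2 ((Commute.refl _).zpow_zpow j k)
    exact (QuotientGroup.eq_one_iff _).1 hone
  have h12 : (⊤ : Subgroup (BS m (m + 1))).lowerCentralSeries 1 = (⊤ : Subgroup (BS m (m + 1))).lowerCentralSeries 2 :=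
    le_antisymm (hle.trans hNle) (lowerCentralSeries_antitone _ (by omega))
  have hstab : ∀ n : ℕ,
      (⊤ : Subgroup (BS m (m + 1))).lowerCentralSeries (n + 1) = (⊤ : Subgroup (BS m (m + 1))).lowerCentralSeries 1 := by
    intro n
    induction n with
    | zero => rfl
    | succ k ih => rw [lcs_succ', ih, ← lcs_succ']; exact h12.symm
  have hinf : (⊤ : Subgroup (BS m (m + 1))).lowerCentralSeries 1 =
      ⨅ i : ℕ, (⊤ : Subgroup (BS m (m + 1))).lowerCentralSeries i := by
    refine le_antisymm (le_iInf fun i => ?_) (iInf_le _ 1)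
    cases i with
    | zero => rw [lowerCentralSeries_zero]; exact le_top
    | succ n => rw [hstab n]
  have hane : a ≠ 1 := bsa_ne_one m hm
  refine ⟨h1, ha1, h12, hinf, ?_, ?_⟩
  · intro hbot
    rw [← hinf] at hbot
    rw [hbot, Subgroup.mem_bot] at ha1
    exact hane ha1
  · intro h01
    have ht1 : t ∈ (⊤ : Subgroup (BS m (m + 1))).lowerCentralSeries 1 := by
      rw [← h01, lowerCentralSeries_zero]; exact Subgroup.mem_top _
    have hker : (⊤ : Subgroup (BS m (m + 1))).lowerCentralSeries 1 ≤ (bsDeg m).ker := by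
      rw [lcs_succ', lowerCentralSeries_zero, Subgroup.commutator_le]
      intro g _ h _
      rw [MonoidHom.mem_ker, map_commutatorElement]
      exact commutatorElement_eq_one_iff_commute.2 (mul_comm _ _)
    have := hker ht1
    rw [MonoidHom.mem_ker, bsDeg_t] at this
    simp at this
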